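/- Fix k ≥ 3 and ℓ ≥ 5, and let C(k,ℓ) be the hypergraph of the preceding construction (extending the edges of K_ℓ − c₁c₂ to k-sets as specified). Then every set of ℓ − 1 vertices of C(k,ℓ) is the set of core vertices of a Berge-K_{ℓ−1} in C(k,ℓ). -/
import Mathlib


/-- A Berge edge map for a clique on core vertex set `core` in a hypergraph `H`:
an assignment of distinct hyperedges to the pairs of distinct core vertices,
each pair contained in its assigned hyperedge. -/
def BergeCliqueMap {V : Type*} (H : Finset (Finset V)) (core : Finset V)
    (φ : Sym2 V → Finset V) : Prop :=
  Set.InjOn φ {p : Sym2 V | ∃ x ∈ core, ∃ y ∈ core, x ≠ y ∧ p = s(x, y)} ∧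
  ∀ x ∈ core, ∀ y ∈ core, x ≠ y →
    φ s(x, y) ∈ H ∧ x ∈ φ s(x, y) ∧ y ∈ φ s(x, y)

/-- `H` contains a Berge-`K_l` with the given set of core vertices. -/
def HasBergeCliqueOn {V : Type*} (H : Finset (Finset V)) (core : Finset V) : Prop :=
  ∃ φ : Sym2 V → Finset V, BergeCliqueMap H core φ

/-- `H` contains a Berge-`K_l`. -/
def HasBergeClique {V : Type*} (l : ℕ) (H : Finset (Finset V)) : Prop :=
  ∃ core : Finset V, core.card = l ∧ HasBergeCliqueOn H core

/-- `H` contains a Berge-`K_l` using the hyperedge `e`. -/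
def HasBergeCliqueUsing {V : Type*} (l : ℕ) (H : Finset (Finset V)) (e : Finset V) : Prop :=
  ∃ core : Finset V, core.card = l ∧ ∃ φ : Sym2 V → Finset V,
    BergeCliqueMap H core φ ∧ ∃ x ∈ core, ∃ y ∈ core, x ≠ y ∧ φ s(x, y) = e

/-- The index of the extra `c`-vertex used to extend the pair `{i,j}` (an edge of
`K_ℓ − c₁c₂`, where `c₁,...,c₅` have indices `0,...,4`) to a `k`-set, following the
construction: a pair containing `c₁` but not `c₂` gets `c₂`; `{c₂,c₃}` gets `c₄`;
`{c₂,c₄}` gets `c₅`; a pair containing `c₂` but none of `c₁,c₃,c₄` gets `c₃`;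
a pair avoiding `c₁,c₂` gets `c₁`. -/
def extraIdx (i j : ℕ) : ℕ :=
  if (i = 0 ∨ j = 0) ∧ ¬(i = 1 ∨ j = 1) then 1
  else if (i = 1 ∧ j = 2) ∨ (i = 2 ∧ j = 1) then 3
  else if (i = 1 ∧ j = 3) ∨ (i = 3 ∧ j = 1) then 4
  else if i = 1 ∨ j = 1 then 2
  else 0

/-- The hyperedge of `C(k,l)` obtained by extending the pair `{i,j}`:
`{cᵢ, cⱼ, c_{extraIdx i j}} ∪ D`, where `D = {l, l+1, ..., l+k-4}` (so `|D| = k-3`). -/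
def C5edge (k l i j : ℕ) : Finset ℕ :=
  ({i, j, extraIdx i j} : Finset ℕ) ∪ Finset.Ico l (l + (k - 3))

/-- The hyperedges of `C(k,l)` for `l ≥ 5`: one `k`-edge for each edge of
`K_l − c₁c₂` (vertices `0,...,l-1` are `c₁,...,c_l`). -/
def C5edges (k l : ℕ) : Finset (Finset ℕ) :=
  (((Finset.range l) ×ˢ (Finset.range l)).filter
      (fun p => p.1 < p.2 ∧ ¬(p.1 = 0 ∧ p.2 = 1))).image
    (fun p => C5edge k l p.1 p.2)

/-- The vertex set of `C(k,l)` for `l ≥ 5`. -/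
def C5verts (k l : ℕ) : Finset ℕ := Finset.range (l + (k - 3))

lemma mem_C5edge {k l i j x : ℕ} :
    x ∈ C5edge k l i j ↔ x = i ∨ x = j ∨ x = extraIdx i j ∨ (l ≤ x ∧ x < l + (k - 3)) := by
  simp [C5edge, or_assoc]

set_option maxHeartbeats 1000000 in
lemma extraIdx_spec (i j : ℕ) (hij : i < j) (h01 : ¬(i = 0 ∧ j = 1)) :
    (i = 0 ∧ 2 ≤ j ∧ extraIdx i j = 1) ∨
    (i = 1 ∧ j = 2 ∧ extraIdx i j = 3) ∨
    (i = 1 ∧ j = 3 ∧ extraIdx i j = 4) ∨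
    (i = 1 ∧ 4 ≤ j ∧ extraIdx i j = 2) ∨
    (2 ≤ i ∧ extraIdx i j = 0) := by
  unfold extraIdx; split_ifs <;> omega

lemma edge_pair_inj (k l : ℕ) (hl : 5 ≤ l) {a b c d : ℕ}
    (hab : a < b) (hbl : b < l) (hcd : c < d) (hdl : d < l)
    (h01ab : ¬(a = 0 ∧ b = 1)) (h01cd : ¬(c = 0 ∧ d = 1))
    (h : C5edge k l a b = C5edge k l c d) : a = c ∧ b = d := by
  have H : ∀ x : ℕ, (x = a ∨ x = b ∨ x = extraIdx a b ∨ (l ≤ x ∧ x < l + (k - 3))) ↔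
      (x = c ∨ x = d ∨ x = extraIdx c d ∨ (l ≤ x ∧ x < l + (k - 3))) := by
    intro x
    rw [← mem_C5edge, ← mem_C5edge, h]
  have Ha := H a
  have Hb := H b
  have Hc := H c
  have Hd := H d
  have H0 := H 0
  have H1 := H 1
  have H2 := H 2
  have H3 := H 3
  have H4 := H 4
  have S1 := extraIdx_spec a b hab h01ab
  have S2 := extraIdx_spec c d hcd h01cd
  clear H h
  rcases S1 with ⟨p1, p2, p3⟩ | ⟨p1, p2, p3⟩ | ⟨p1, p2, p3⟩ | ⟨p1, p2, p3⟩ | ⟨p1, p3⟩ <;>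
    rcases S2 with ⟨q1, q2, q3⟩ | ⟨q1, q2, q3⟩ | ⟨q1, q2, q3⟩ | ⟨q1, q2, q3⟩ | ⟨q1, q3⟩ <;>
    omega

lemma C5edge_mem (k l a b : ℕ) (hab : a < b) (hbl : b < l) (h01 : ¬(a = 0 ∧ b = 1)) :
    C5edge k l a b ∈ C5edges k l := by
  refine Finset.mem_image.mpr ⟨(a, b), ?_, rfl⟩
  simp only [Finset.mem_filter, Finset.mem_product, Finset.mem_range]
  exact ⟨⟨lt_trans hab hbl, hbl⟩, hab, h01⟩

/-- for `k ≥ 3`, `ℓ ≥ 5`, every set of `ℓ − 1` vertices of `C(k,ℓ)` is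
the set of core vertices of a Berge-`K_{ℓ−1}` in `C(k,ℓ)`. -/
theorem stmt6 (k l : ℕ) (hk : 3 ≤ k) (hl : 5 ≤ l) (X : Finset ℕ)
    (hX : X ⊆ C5verts k l) (hXcard : X.card = l - 1) :
    HasBergeCliqueOn (C5edges k l) X := by
  unfold HasBergeCliqueOn BergeCliqueMap
  classical
  set S : Finset ℕ := X.filter (fun x => l ≤ x) with hS
  set T : Finset ℕ := Finset.range l \ X with hT
  have hXv : ∀ x ∈ X, x < l + (k - 3) := by
    intro x hx
    have := hX hx
    simpa [C5verts] using this
  have hScard : S.card + (X.filter (fun x => ¬ l ≤ x)).card = X.card :=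
    Finset.card_filter_add_card_filter_not (fun x => l ≤ x)
  have hfe : X.filter (fun x => ¬ l ≤ x) = Finset.range l ∩ X := by
    ext x
    simp only [Finset.mem_filter, Finset.mem_inter, Finset.mem_range, not_le]
    tauto
  have hTcard : (Finset.range l ∩ X).card + T.card = l := by
    rw [hT]
    rw [Finset.card_inter_add_card_sdiff]
    exact Finset.card_range l
  have hIcard : (Finset.range l ∩ X).card ≤ l - 1 := by
    calc (Finset.range l ∩ X).card ≤ X.card := Finset.card_le_card Finset.inter_subset_right
    _ = l - 1 := hXcard
  have hST : S.card ≤ T.card := by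
    rw [hfe] at hScard
    omega
  obtain ⟨T', hT'sub, hT'card⟩ := Finset.exists_subset_card_eq hST
  have e : (S : Finset ℕ) ≃ (T' : Finset ℕ) := Finset.equivOfCardEq hT'card.symm
  set ψ : ℕ → ℕ := fun x => if h : x ∈ S then ((e ⟨x, h⟩ : T') : ℕ) else x with hψ
  have hψT : ∀ x (h : x ∈ S), ψ x ∈ T := by
    intro x h
    have : ψ x = ((e ⟨x, h⟩ : T') : ℕ) := by simp [hψ, dif_pos h]
    rw [this]
    exact hT'sub (e ⟨x, h⟩).2
  have hψid : ∀ x, x ∉ S → ψ x = x := by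
    intro x h; simp [hψ, dif_neg h]
  have hTprop : ∀ y ∈ T, y ∉ X ∧ y < l := by
    intro y hy
    rw [hT, Finset.mem_sdiff, Finset.mem_range] at hy
    exact ⟨hy.2, hy.1⟩
  have hψlt : ∀ x ∈ X, ψ x < l := by
    intro x hx
    by_cases h : x ∈ S
    · exact (hTprop _ (hψT x h)).2
    · rw [hψid x h]
      have : ¬ l ≤ x := fun hc => h (Finset.mem_filter.mpr ⟨hx, hc⟩)
      omega
  have hψinj : ∀ x ∈ X, ∀ y ∈ X, ψ x = ψ y → x = y := by
    intro x hx y hy hxy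
    by_cases h1 : x ∈ S <;> by_cases h2 : y ∈ S
    · have hx' : ψ x = ((e ⟨x, h1⟩ : T') : ℕ) := by simp [hψ, dif_pos h1]
      have hy' : ψ y = ((e ⟨y, h2⟩ : T') : ℕ) := by simp [hψ, dif_pos h2]
      rw [hx', hy'] at hxy
      have := e.injective (Subtype.ext hxy)
      exact congrArg Subtype.val this
    · exfalso
      rw [hψid y h2] at hxy
      have := (hTprop _ (hψT x h1)).1
      rw [hxy] at this
      exact this hy
    · exfalso
      rw [hψid x h1] at hxy
      have := (hTprop _ (hψT y h2)).1
      rw [← hxy] at this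
      exact this hx
    · rw [hψid x h1, hψid y h2] at hxy
      exact hxy
  set Y : Finset ℕ := X.image ψ with hY
  have hYmem : ∀ x ∈ X, ψ x ∈ Y := fun x hx => Finset.mem_image_of_mem ψ hx
  have hYsub : Y ⊆ Finset.range l := by
    intro y hy
    rw [hY, Finset.mem_image] at hy
    obtain ⟨x, hx, rfl⟩ := hy
    exact Finset.mem_range.mpr (hψlt x hx)
  have hYcard : Y.card = l - 1 := by
    rw [hY, Finset.card_image_of_injOn (fun x hx y hy => hψinj x hx y hy)]
    exact hXcard
  have hone : (Finset.range l \ Y).card = 1 := by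
    rw [Finset.card_sdiff_of_subset hYsub, Finset.card_range, hYcard]
    omega
  obtain ⟨m, hm⟩ := Finset.card_eq_one.mp hone
  have hmprop : m < l ∧ m ∉ Y := by
    have : m ∈ Finset.range l \ Y := by rw [hm]; exact Finset.mem_singleton_self m
    rw [Finset.mem_sdiff, Finset.mem_range] at this
    exact this
  have hmY : ∀ y ∈ Y, y ≠ m := fun y hy hc => hmprop.2 (hc ▸ hy)
  -- the Berge map
  set F : ℕ → ℕ → Finset ℕ := fun x y =>
    if min (ψ x) (ψ y) = 0 ∧ max (ψ x) (ψ y) = 1 then C5edge k l 0 m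
    else C5edge k l (min (ψ x) (ψ y)) (max (ψ x) (ψ y)) with hF
  have hFsymm : ∀ x y, F x y = F y x := by
    intro x y
    simp only [hF, min_comm, max_comm]
  refine ⟨Sym2.lift ⟨F, hFsymm⟩, ?_, ?_⟩
  · -- injectivity
    rintro p ⟨x, hx, y, hy, hxy, rfl⟩ q ⟨u, hu, v, hv, huv, rfl⟩ hpq
    simp only [Sym2.lift_mk] at hpq
    have hxy' : ψ x ≠ ψ y := fun hc => hxy (hψinj x hx y hy hc)
    have huv' : ψ u ≠ ψ v := fun hc => huv (hψinj u hu v hv hc)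
    have hxl := hψlt x hx
    have hyl := hψlt y hy
    have hul := hψlt u hu
    have hvl := hψlt v hv
    have key : (ψ x = ψ u ∧ ψ y = ψ v) ∨ (ψ x = ψ v ∧ ψ y = ψ u) := by
      by_cases b1 : min (ψ x) (ψ y) = 0 ∧ max (ψ x) (ψ y) = 1 <;>
        by_cases b2 : min (ψ u) (ψ v) = 0 ∧ max (ψ u) (ψ v) = 1
      · omega
      · exfalso
        rw [hF] at hpq
        simp only [if_pos b1, if_neg b2] at hpq
        -- m ≥ 2 since 0, 1 ∈ Y
        have h0Y : (0 : ℕ) ∈ Y := by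
          have := hYmem x hx; have := hYmem y hy
          rcases min_cases (ψ x) (ψ y) with ⟨h, _⟩ | ⟨h, _⟩ <;>
            · rw [← b1.1, h]; first | exact hYmem x hx | exact hYmem y hy
        have h1Y : (1 : ℕ) ∈ Y := by
          rcases max_cases (ψ x) (ψ y) with ⟨h, _⟩ | ⟨h, _⟩ <;>
            · rw [← b1.2, h]; first | exact hYmem x hx | exact hYmem y hy
        have hm2 : 2 ≤ m := by
          have h0 := hmY 0 h0Y
          have h1 := hmY 1 h1Y
          omega
        have := edge_pair_inj k l hl (by omega : 0 < m) hmprop.1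
          (by omega : min (ψ u) (ψ v) < max (ψ u) (ψ v)) (by omega) (by omega) b2 hpq
        have hmax : max (ψ u) (ψ v) ∈ Y := by
          rcases max_cases (ψ u) (ψ v) with ⟨h, _⟩ | ⟨h, _⟩ <;>
            · rw [h]; first | exact hYmem u hu | exact hYmem v hv
        exact hmY _ hmax this.2.symm
      · exfalso
        rw [hF] at hpq
        simp only [if_pos b2, if_neg b1] at hpq
        have h0Y : (0 : ℕ) ∈ Y := by
          rcases min_cases (ψ u) (ψ v) with ⟨h, _⟩ | ⟨h, _⟩ <;>
            · rw [← b2.1, h]; first | exact hYmem u hu | exact hYmem v hv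
        have h1Y : (1 : ℕ) ∈ Y := by
          rcases max_cases (ψ u) (ψ v) with ⟨h, _⟩ | ⟨h, _⟩ <;>
            · rw [← b2.2, h]; first | exact hYmem u hu | exact hYmem v hv
        have hm2 : 2 ≤ m := by
          have h0 := hmY 0 h0Y
          have h1 := hmY 1 h1Y
          omega
        have := edge_pair_inj k l hl (by omega : 0 < m) hmprop.1
          (by omega : min (ψ x) (ψ y) < max (ψ x) (ψ y)) (by omega) (by omega) b1 hpq.symm
        have hmax : max (ψ x) (ψ y) ∈ Y := by
          rcases max_cases (ψ x) (ψ y) with ⟨h, _⟩ | ⟨h, _⟩ <;>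
            · rw [h]; first | exact hYmem x hx | exact hYmem y hy
        exact hmY _ hmax this.2.symm
      · rw [hF] at hpq
        simp only [if_neg b1, if_neg b2] at hpq
        have := edge_pair_inj k l hl (by omega : min (ψ x) (ψ y) < max (ψ x) (ψ y)) (by omega)
          (by omega : min (ψ u) (ψ v) < max (ψ u) (ψ v)) (by omega) b1 b2 hpq
        omega
    rcases key with ⟨h1, h2⟩ | ⟨h1, h2⟩
    · rw [Sym2.eq_iff]
      exact Or.inl ⟨hψinj x hx u hu h1, hψinj y hy v hv h2⟩
    · rw [Sym2.eq_iff]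
      exact Or.inr ⟨hψinj x hx v hv h1, hψinj y hy u hu h2⟩
  · -- edge conditions
    intro x hx y hy hxy
    have hlift : Sym2.lift ⟨F, hFsymm⟩ s(x, y) = F x y := Sym2.lift_mk _ _ _
    rw [hlift]
    have hxy' : ψ x ≠ ψ y := fun hc => hxy (hψinj x hx y hy hc)
    have hxl := hψlt x hx
    have hyl := hψlt y hy
    -- helper: a vertex of X is in any C5edge containing its ψ-image or if it is large
    have hmemX : ∀ z ∈ X, ∀ a b : ℕ, ψ z ∈ C5edge k l a b → z ∈ C5edge k l a b := by
      intro z hz a b hzm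
      by_cases h : z ∈ S
      · have hlz : l ≤ z := (Finset.mem_filter.mp h).2
        rw [mem_C5edge]
        exact Or.inr (Or.inr (Or.inr ⟨hlz, hXv z hz⟩))
      · rw [hψid z h] at hzm
        exact hzm
    by_cases b1 : min (ψ x) (ψ y) = 0 ∧ max (ψ x) (ψ y) = 1
    · rw [hF]
      simp only [if_pos b1]
      have h0Y : (0 : ℕ) ∈ Y := by
        rcases min_cases (ψ x) (ψ y) with ⟨h, _⟩ | ⟨h, _⟩ <;>
          · rw [← b1.1, h]; first | exact hYmem x hx | exact hYmem y hy
      have h1Y : (1 : ℕ) ∈ Y := by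
        rcases max_cases (ψ x) (ψ y) with ⟨h, _⟩ | ⟨h, _⟩ <;>
          · rw [← b1.2, h]; first | exact hYmem x hx | exact hYmem y hy
      have hm2 : 2 ≤ m := by
        have h0 := hmY 0 h0Y
        have h1 := hmY 1 h1Y
        omega
      have hex : extraIdx 0 m = 1 := by
        have := extraIdx_spec 0 m (by omega) (by omega)
        omega
      refine ⟨C5edge_mem k l 0 m (by omega) hmprop.1 (by omega), ?_, ?_⟩
      · apply hmemX x hx
        rw [mem_C5edge, hex]
        omega
      · apply hmemX y hy
        rw [mem_C5edge, hex]
        omega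
    · rw [hF]
      simp only [if_neg b1]
      refine ⟨C5edge_mem k l _ _ (by omega) (by omega) b1, ?_, ?_⟩
      · apply hmemX x hx
        rw [mem_C5edge]
        omega
      · apply hmemX y hy
        rw [mem_C5edge]
        omega
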